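/- arXiv:2212.12433 — 2 statements merged into one kernel-verified Lean document; each statement's English description precedes it below -/
import Mathlib

section
/- Let S be a nonzero graded submodule of M that is gr-sum-irreducible, i.e., whenever A and B are graded submodules of M with A ⊆ S, B ⊆ S, A ≠ S, B ≠ S, then A + B ≠ S. If rS = r²S for every homogeneous element r ∈ Γ with r ∉ Gr(Ann_Γ(S)), then S is a gr-C-2^A-secondary submodule of M. -/
open Pointwise DirectSum

section Preliminaries

variable {G : Type*} [AddGroup G] [DecidableEq G]
variable {Γ : Type*} [CommRing Γ]
variable {M : Type*} [AddCommGroup M] [Module Γ M]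

/-- `x` lies in the graded radical `Gr I`: for homogeneous `x` this is the defining
condition that some positive power of `x` lies in `I`. -/
def grMem (I : Ideal Γ) (x : Γ) : Prop := ∃ n : ℕ, 0 < n ∧ x ^ n ∈ I

variable (𝒜 : G → AddSubgroup Γ) (ℳ : G → AddSubgroup M)
variable [GradedRing 𝒜] [DirectSum.Decomposition ℳ] [SetLike.GradedSMul 𝒜 ℳ]

/-- A graded submodule: closed under taking homogeneous components. -/
def IsGradedSubmodule (S : Submodule Γ M) : Prop :=
  ∀ (g : G) ⦃x : M⦄, x ∈ S → (DirectSum.decompose ℳ x g : M) ∈ S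

/-- A graded ideal: closed under taking homogeneous components. -/
def IsGradedIdeal (I : Ideal Γ) : Prop :=
  ∀ (g : G) ⦃x : Γ⦄, x ∈ I → (DirectSum.decompose 𝒜 x g : Γ) ∈ I

/-- A graded classical 2-absorbing secondary (gr-C-2^A-secondary) submodule:
a nonzero graded submodule `S` such that whenever `r, s` are homogeneous and `L` is a
graded submodule with `r*s • S ⊆ L`, either `r • S ⊆ L`, or `s • S ⊆ L`, or
`r*s ∈ Gr(Ann S)`. -/
def IsGrC2ASecondary (S : Submodule Γ M) : Prop :=
  S ≠ ⊥ ∧ IsGradedSubmodule ℳ S ∧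
    ∀ r s : Γ, SetLike.IsHomogeneousElem 𝒜 r → SetLike.IsHomogeneousElem 𝒜 s →
      ∀ L : Submodule Γ M, IsGradedSubmodule ℳ L →
        (r * s) • S ≤ L →
          r • S ≤ L ∨ s • S ≤ L ∨ grMem S.annihilator (r * s)

end Preliminaries

variable {G : Type*} [AddGroup G] [DecidableEq G]
variable {Γ : Type*} [CommRing Γ]
variable {M : Type*} [AddCommGroup M] [Module Γ M]
variable (𝒜 : G → AddSubgroup Γ) (ℳ : G → AddSubgroup M)
variable [GradedRing 𝒜] [DirectSum.Decomposition ℳ] [SetLike.GradedSMul 𝒜 ℳ]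

lemma mem_psmul {r : Γ} {S : Submodule Γ M} {x : M} :
    x ∈ r • S ↔ ∃ y ∈ S, r • y = x := by
  rw [← SetLike.mem_coe, Submodule.coe_pointwise_smul]
  exact Set.mem_smul_set

/-- Decomposition of `r • m` for `r` homogeneous of degree `d`. -/
lemma decompose_smul_hom {d : G} {r : Γ} (hr : r ∈ 𝒜 d) (m : M) (g : G) :
    (DirectSum.decompose ℳ (r • m) (d + g) : M) = r • (DirectSum.decompose ℳ m g : M) := by
  induction m using DirectSum.Decomposition.inductionOn ℳ with
  | zero => simp
  | @homogeneous i x =>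
      have hx : (x : M) ∈ ℳ i := x.2
      have hrx : r • (x : M) ∈ ℳ (d + i) := SetLike.GradedSMul.smul_mem hr hx
      by_cases hig : i = g
      · subst hig
        rw [DirectSum.decompose_of_mem_same ℳ hrx, DirectSum.decompose_of_mem_same ℳ hx]
      · rw [DirectSum.decompose_of_mem_ne ℳ hrx (by simpa using hig),
          DirectSum.decompose_of_mem_ne ℳ hx hig, smul_zero]
  | add a b ha hb =>
      rw [smul_add, DirectSum.decompose_add, DirectSum.decompose_add, DirectSum.add_apply,
        DirectSum.add_apply, AddSubgroup.coe_add, AddSubgroup.coe_add, ha, hb, smul_add]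

lemma graded_psmul {d : G} {r : Γ} (hr : r ∈ 𝒜 d) {S : Submodule Γ M}
    (hS : IsGradedSubmodule ℳ S) : IsGradedSubmodule ℳ (r • S) := by
  intro g x hx
  obtain ⟨y, hy, rfl⟩ := mem_psmul.mp hx
  have : g = d + (-d + g) := (add_neg_cancel_left d g).symm
  rw [this, decompose_smul_hom 𝒜 ℳ hr]
  exact Submodule.smul_mem_pointwise_smul _ _ _ (hS _ hy)

/-- Key lemma: homogeneous `r` not in the graded radical of the annihilator acts
surjectively on a sum-irreducible `S` with `r•S = r²•S`. -/
lemma key (S : Submodule Γ M) (hSg : IsGradedSubmodule ℳ S)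
    (hirr : ∀ A B : Submodule Γ M, IsGradedSubmodule ℳ A → IsGradedSubmodule ℳ B →
      A ≤ S → B ≤ S → A ≠ S → B ≠ S → A ⊔ B ≠ S)
    {d : G} {r : Γ} (hrd : r ∈ 𝒜 d) (hnr : ¬ grMem S.annihilator r)
    (heq : r • S = (r ^ 2) • S) : r • S = S := by
  set K : Submodule Γ M := LinearMap.ker (LinearMap.lsmul Γ M r) ⊓ S with hK
  have hKmem : ∀ x, x ∈ K ↔ r • x = 0 ∧ x ∈ S := by
    intro x; simp [hK, LinearMap.mem_ker]
  have hrS_le : r • S ≤ S := by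
    intro x hx
    obtain ⟨y, hy, rfl⟩ := mem_psmul.mp hx
    exact S.smul_mem r hy
  have hK_le : K ≤ S := inf_le_right
  have hKg : IsGradedSubmodule ℳ K := by
    intro g x hx
    rw [hKmem] at hx ⊢
    refine ⟨?_, hSg _ hx.2⟩
    have := decompose_smul_hom 𝒜 ℳ hrd x g
    rw [← this, hx.1]
    simp
  have hsup : (r • S) ⊔ K = S := by
    apply le_antisymm (sup_le hrS_le hK_le)
    intro m hm
    have : r • m ∈ (r ^ 2) • S := heq ▸ Submodule.smul_mem_pointwise_smul _ _ _ hm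
    obtain ⟨m', hm', hmm⟩ := mem_psmul.mp this
    have h1 : r • m' ∈ r • S := Submodule.smul_mem_pointwise_smul _ _ _ hm'
    have h2 : m - r • m' ∈ K := by
      rw [hKmem]
      constructor
      · rw [smul_sub, smul_smul, ← pow_two, hmm, sub_self]
      · exact S.sub_mem hm (S.smul_mem _ hm')
    have : r • m' + (m - r • m') ∈ (r • S) ⊔ K :=
      Submodule.add_mem_sup h1 h2
    simpa using this
  by_contra hne
  have hKne : K ≠ S := by
    intro hKS
    apply hnr
    refine ⟨1, one_pos, ?_⟩
    rw [pow_one, Submodule.mem_annihilator]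
    intro m hm
    exact ((hKmem m).mp (hKS ▸ hm)).1
  exact hirr _ _ (graded_psmul 𝒜 ℳ hrd hSg) hKg hrS_le hK_le hne hKne hsup

/-- If `S` is a nonzero graded gr-sum-irreducible submodule of `M` and `r • S = r² • S`
for every homogeneous `r ∉ Gr(Ann S)`, then `S` is a gr-C-2^A-secondary submodule. -/
theorem stmt8 (S : Submodule Γ M) (hS0 : S ≠ ⊥) (hSg : IsGradedSubmodule ℳ S)
    (hirr : ∀ A B : Submodule Γ M, IsGradedSubmodule ℳ A → IsGradedSubmodule ℳ B →
      A ≤ S → B ≤ S → A ≠ S → B ≠ S → A ⊔ B ≠ S)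
    (h : ∀ r : Γ, SetLike.IsHomogeneousElem 𝒜 r → ¬ grMem S.annihilator r →
      r • S = (r ^ 2) • S) :
    IsGrC2ASecondary 𝒜 ℳ S := by
  refine ⟨hS0, hSg, fun r s hr hs L hLg hrsL => ?_⟩
  by_cases hrs : grMem S.annihilator (r * s)
  · exact Or.inr (Or.inr hrs)
  have hnr : ¬ grMem S.annihilator r := by
    rintro ⟨n, hn, hrn⟩
    exact hrs ⟨n, hn, by rw [mul_pow]; exact Ideal.mul_mem_right _ _ hrn⟩
  have hns : ¬ grMem S.annihilator s := by
    rintro ⟨n, hn, hsn⟩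
    exact hrs ⟨n, hn, by rw [mul_pow]; exact Ideal.mul_mem_left _ _ hsn⟩
  obtain ⟨dr, hrd⟩ := hr
  obtain ⟨ds, hsd⟩ := hs
  have hrS : r • S = S := key 𝒜 ℳ S hSg hirr hrd hnr (h r ⟨dr, hrd⟩ hnr)
  have hsS : s • S = S := key 𝒜 ℳ S hSg hirr hsd hns (h s ⟨ds, hsd⟩ hns)
  have : (r * s) • S = S := by rw [mul_smul, hsS, hrS]
  left
  rw [hrS, ← this]
  exact hrsL
end

section
/- Let M and M' be G-graded Γ-modules and let ψ : M → M' be a graded Γ-monomorphism, i.e., an injective Γ-linear map with ψ(M_g) ⊆ M'_g for all g ∈ G. Let S' be a nonzero graded submodule of M' contained in the image ψ(M), and suppose S' is a gr-C-2^A-secondary submodule of ψ(M), i.e., for all homogeneous r, s ∈ Γ and every graded submodule L' of M' contained in ψ(M), rsS' ⊆ L' implies rS' ⊆ L' or sS' ⊆ L' or rs ∈ Gr(Ann_Γ(S')). Then ψ⁻¹(S') is a gr-C-2^A-secondary submodule of M. -/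
open Pointwise DirectSum

variable {G : Type*} [AddGroup G] [DecidableEq G]
variable {Γ : Type*} [CommRing Γ]
variable {M : Type*} [AddCommGroup M] [Module Γ M]
variable {M' : Type*} [AddCommGroup M'] [Module Γ M']
variable (𝒜 : G → AddSubgroup Γ) (ℳ : G → AddSubgroup M) (ℳ' : G → AddSubgroup M')
variable [GradedRing 𝒜] [DirectSum.Decomposition ℳ] [SetLike.GradedSMul 𝒜 ℳ]
variable [DirectSum.Decomposition ℳ'] [SetLike.GradedSMul 𝒜 ℳ']


lemma decompose_map_aux {G : Type*} [AddGroup G] [DecidableEq G]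
    {Γ : Type*} [CommRing Γ]
    {M : Type*} [AddCommGroup M] [Module Γ M]
    {M' : Type*} [AddCommGroup M'] [Module Γ M']
    (ℳ : G → AddSubgroup M) (ℳ' : G → AddSubgroup M')
    [DirectSum.Decomposition ℳ] [DirectSum.Decomposition ℳ']
    (ψ : M →ₗ[Γ] M') (hgr : ∀ (g : G) (x : M), x ∈ ℳ g → ψ x ∈ ℳ' g)
    (x : M) (g : G) :
    (DirectSum.decompose ℳ' (ψ x) g : M') = ψ (DirectSum.decompose ℳ x g) := by
  induction x using DirectSum.Decomposition.inductionOn ℳ with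
  | zero => simp
  | @homogeneous i m =>
      rcases eq_or_ne i g with rfl | hne
      · rw [DirectSum.decompose_of_mem_same ℳ' (hgr i m m.2),
          DirectSum.decompose_of_mem_same ℳ m.2]
      · rw [DirectSum.decompose_of_mem_ne ℳ' (hgr i m m.2) hne,
          DirectSum.decompose_of_mem_ne ℳ m.2 hne, map_zero]
  | add a b ha hb =>
      rw [map_add, DirectSum.decompose_add, DirectSum.add_apply, AddSubgroup.coe_add, ha, hb,
        DirectSum.decompose_add, DirectSum.add_apply, AddSubgroup.coe_add, map_add]

/-- If `ψ : M → M'` is a graded monomorphism and `S'` is a gr-C-2^A-secondary submodule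
of `ψ(M)` (a nonzero graded submodule of `M'` contained in the image of `ψ`, satisfying
the gr-C-2^A-secondary condition with respect to graded submodules of `M'` contained in
`ψ(M)`), then `ψ⁻¹(S')` is a gr-C-2^A-secondary submodule of `M`. -/
theorem stmt12 (ψ : M →ₗ[Γ] M') (hinj : Function.Injective ψ)
    (hgr : ∀ (g : G) (x : M), x ∈ ℳ g → ψ x ∈ ℳ' g)
    (S' : Submodule Γ M') (hS'0 : S' ≠ ⊥) (hS'g : IsGradedSubmodule ℳ' S')
    (hle : S' ≤ LinearMap.range ψ)
    (hsec : ∀ r s : Γ, SetLike.IsHomogeneousElem 𝒜 r → SetLike.IsHomogeneousElem 𝒜 s →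
      ∀ L' : Submodule Γ M', IsGradedSubmodule ℳ' L' → L' ≤ LinearMap.range ψ →
        (r * s) • S' ≤ L' →
          r • S' ≤ L' ∨ s • S' ≤ L' ∨ grMem S'.annihilator (r * s)) :
    IsGrC2ASecondary 𝒜 ℳ (S'.comap ψ) := by
    classical
  constructor
  · -- nonzero
    intro h
    apply hS'0
    rw [eq_bot_iff]
    intro y hy
    obtain ⟨x, rfl⟩ := hle hy
    have hx : x ∈ S'.comap ψ := hy
    rw [h] at hx
    simp only [Submodule.mem_bot] at hx ⊢
    rw [hx, map_zero]
  constructor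
  · -- graded
    intro g x hx
    have := decompose_map_aux ℳ ℳ' ψ hgr x g
    simp only [Submodule.mem_comap]
    rw [← this]
    exact hS'g g hx
  · intro r s hr hs L hLg hrsL
    -- L' := map ψ L
    have hmapg : IsGradedSubmodule ℳ' (L.map ψ) := by
      intro g y hy
      obtain ⟨x, hxL, rfl⟩ := hy
      rw [decompose_map_aux ℳ ℳ' ψ hgr x g]
      exact ⟨_, hLg g hxL, rfl⟩
    have hmaple : L.map ψ ≤ LinearMap.range ψ := LinearMap.map_le_range
    have hrs' : (r * s) • S' ≤ L.map ψ := by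
      intro y hy
      rw [← SetLike.mem_coe, Submodule.coe_pointwise_smul, Set.mem_smul_set] at hy
      obtain ⟨z, hz, rfl⟩ := hy
      obtain ⟨x, rfl⟩ := hle hz
      have hxc : x ∈ S'.comap ψ := hz
      have : (r * s) • x ∈ L := hrsL (Submodule.smul_mem_pointwise_smul x (r * s) _ hxc)
      exact ⟨(r * s) • x, this, map_smul ψ _ x⟩
    rcases hsec r s hr hs (L.map ψ) hmapg hmaple hrs' with h | h | h
    · left
      intro y hy
      rw [← SetLike.mem_coe, Submodule.coe_pointwise_smul, Set.mem_smul_set] at hy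
      obtain ⟨x, hx, rfl⟩ := hy
      have : r • ψ x ∈ L.map ψ := h (Submodule.smul_mem_pointwise_smul _ r _ hx)
      obtain ⟨z, hzL, hz⟩ := this
      have : ψ z = ψ (r • x) := by rw [hz, map_smul]
      rwa [← hinj this]
    · right; left
      intro y hy
      rw [← SetLike.mem_coe, Submodule.coe_pointwise_smul, Set.mem_smul_set] at hy
      obtain ⟨x, hx, rfl⟩ := hy
      have : s • ψ x ∈ L.map ψ := h (Submodule.smul_mem_pointwise_smul _ s _ hx)
      obtain ⟨z, hzL, hz⟩ := this
      have : ψ z = ψ (s • x) := by rw [hz, map_smul]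
      rwa [← hinj this]
    · right; right
      obtain ⟨n, hn, hann⟩ := h
      refine ⟨n, hn, ?_⟩
      rw [Submodule.mem_annihilator] at hann ⊢
      intro x hx
      apply hinj
      rw [map_smul, map_zero]
      exact hann _ hx
end
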